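/- Let n ≥ 1, let T be an n×n real matrix, p⁰ ∈ ℝⁿ, N ≥ 1, λ > 0 and ω > 0, and define the trajectory-regularized objective L[h] = (1/N) · Σ_{t=0}^{N−1} (p⁰Tᵗ · ((T − I)h)) − (λ/(2N)) · Σ_{t=0}^{N−1} (p⁰Tᵗ · ((T − I)h))² − (λω/(2N)) · ‖h‖². Then L is strictly concave on ℝⁿ, and a vector h ∈ ℝⁿ is the unique global maximizer of L if and only if it satisfies the stationarity equation λ · [ Σ_{t=0}^{N−1} (p⁰(Tᵗ⁺¹ − Tᵗ) · h) · p⁰(Tᵗ⁺¹ − Tᵗ) + ω h ] = p⁰ Tᴺ − p⁰. -/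

import Mathlib

open Finset Matrix

private lemma sum_dot' {n : ℕ} {s : Finset ℕ} (f : ℕ → Fin n → ℝ) (h : Fin n → ℝ) :
    (∑ t ∈ s, f t) ⬝ᵥ h = ∑ t ∈ s, f t ⬝ᵥ h := by
  classical
  induction s using Finset.induction with
  | empty => simp [dotProduct]
  | insert _ _ hx ih => simp [Finset.sum_insert hx, add_dotProduct, ih]

/-- For `ω > 0` the trajectory-regularized objective is strictly concave, and `h` is
its unique global maximizer iff `h` satisfies the stationarity equation
`λ·[Σ_t (p⁰(Tᵗ⁺¹−Tᵗ)·h)·p⁰(Tᵗ⁺¹−Tᵗ) + ω h] = p⁰Tᴺ − p⁰`. -/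
theorem stmt_8 (n : ℕ) (hn : 1 ≤ n) (T : Matrix (Fin n) (Fin n) ℝ) (p0 : Fin n → ℝ)
    (N : ℕ) (hN : 1 ≤ N) (lam ω : ℝ) (hlam : 0 < lam) (hω : 0 < ω)
    (L : (Fin n → ℝ) → ℝ)
    (hL : ∀ h : Fin n → ℝ,
      L h = (1 / N) * ∑ t ∈ Finset.range N,
              ((p0 ᵥ* T ^ t) ⬝ᵥ ((T - 1) *ᵥ h))
            - (lam / (2 * N)) * ∑ t ∈ Finset.range N,
              ((p0 ᵥ* T ^ t) ⬝ᵥ ((T - 1) *ᵥ h)) ^ 2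
            - (lam * ω / (2 * N)) * ∑ i, (h i) ^ 2) :
    StrictConcaveOn ℝ Set.univ L ∧
    (∀ h : Fin n → ℝ,
      (∀ g : Fin n → ℝ, g ≠ h → L g < L h) ↔
      lam • (∑ t ∈ Finset.range N,
              (((p0 ᵥ* T ^ (t + 1) - p0 ᵥ* T ^ t) ⬝ᵥ h) •
                (p0 ᵥ* T ^ (t + 1) - p0 ᵥ* T ^ t))
            + ω • h)
        = p0 ᵥ* T ^ N - p0) := by
  classical
  have hNpos : (0 : ℝ) < N := by exact_mod_cast hN
  set a : ℕ → Fin n → ℝ := fun t => p0 ᵥ* T ^ (t + 1) - p0 ᵥ* T ^ t with ha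
  set b : Fin n → ℝ := p0 ᵥ* T ^ N - p0 with hb
  -- telescoping sum
  have hbsum : ∑ t ∈ Finset.range N, a t = b := by
    simpa [ha, hb, Matrix.vecMul_one] using
      Finset.sum_range_sub (fun t => p0 ᵥ* T ^ t) N
  -- key rewriting of the summands
  have hkey : ∀ (t : ℕ) (h : Fin n → ℝ),
      (p0 ᵥ* T ^ t) ⬝ᵥ ((T - 1) *ᵥ h) = a t ⬝ᵥ h := by
    intro t h
    rw [Matrix.dotProduct_mulVec]
    congr 1
    simp [ha, Matrix.vecMul_sub, pow_succ, ← Matrix.vecMul_vecMul]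
  -- the quadratic and bilinear forms
  set B : (Fin n → ℝ) → (Fin n → ℝ) → ℝ :=
    fun x y => (∑ t ∈ Finset.range N, (a t ⬝ᵥ x) * (a t ⬝ᵥ y)) + ω * (x ⬝ᵥ y) with hB
  -- rewrite L
  have hLQ : ∀ h : Fin n → ℝ,
      L h = (1 / N) * (b ⬝ᵥ h) - (lam / (2 * N)) * B h h := by
    intro h
    have h1 : ∑ t ∈ Finset.range N, ((p0 ᵥ* T ^ t) ⬝ᵥ ((T - 1) *ᵥ h))
        = b ⬝ᵥ h := by
      rw [← hbsum, sum_dot']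
      exact Finset.sum_congr rfl fun t _ => hkey t h
    have h2 : ∑ t ∈ Finset.range N, ((p0 ᵥ* T ^ t) ⬝ᵥ ((T - 1) *ᵥ h)) ^ 2
        = ∑ t ∈ Finset.range N, (a t ⬝ᵥ h) ^ 2 :=
      Finset.sum_congr rfl fun t _ => by rw [hkey]
    have h3 : ∑ i, (h i) ^ 2 = h ⬝ᵥ h := by
      simp [dotProduct, sq]
    rw [hL, h1, h2, h3, hB]
    have : ∑ t ∈ Finset.range N, (a t ⬝ᵥ h) ^ 2
        = ∑ t ∈ Finset.range N, (a t ⬝ᵥ h) * (a t ⬝ᵥ h) := by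
      simp [sq]
    rw [this]; ring
  -- linearity of dot products
  have dotlin : ∀ (u x y : Fin n → ℝ) (s t : ℝ),
      u ⬝ᵥ (s • x + t • y) = s * (u ⬝ᵥ x) + t * (u ⬝ᵥ y) := by
    intro u x y s t
    simp [dotProduct_add, dotProduct_smul, smul_eq_mul]
  -- expansion of B
  have Bsymm : ∀ x y, B x y = B y x := by
    intro x y
    simp [hB, mul_comm, dotProduct_comm]
  have Bexp : ∀ (x y : Fin n → ℝ) (s t : ℝ),
      B (s • x + t • y) (s • x + t • y)
        = s ^ 2 * B x x + 2 * s * t * B x y + t ^ 2 * B y y := by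
    intro x y s t
    simp only [hB]
    have hdot : (s • x + t • y) ⬝ᵥ (s • x + t • y)
        = s ^ 2 * (x ⬝ᵥ x) + 2 * s * t * (x ⬝ᵥ y) + t ^ 2 * (y ⬝ᵥ y) := by
      rw [dotlin, dotProduct_comm, dotlin, dotProduct_comm (s • x + t • y) y, dotlin]
      rw [dotProduct_comm y x]
      ring
    have hsum : ∑ u ∈ Finset.range N,
          (a u ⬝ᵥ (s • x + t • y)) * (a u ⬝ᵥ (s • x + t • y))
        = s ^ 2 * ∑ u ∈ Finset.range N, (a u ⬝ᵥ x) * (a u ⬝ᵥ x)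
          + 2 * s * t * ∑ u ∈ Finset.range N, (a u ⬝ᵥ x) * (a u ⬝ᵥ y)
          + t ^ 2 * ∑ u ∈ Finset.range N, (a u ⬝ᵥ y) * (a u ⬝ᵥ y) := by
      rw [Finset.mul_sum, Finset.mul_sum, Finset.mul_sum, ← Finset.sum_add_distrib,
        ← Finset.sum_add_distrib]
      refine Finset.sum_congr rfl fun u _ => ?_
      rw [dotlin]
      ring
    rw [hdot, hsum]
    ring
  -- positivity of B on nonzero vectors
  have Bpos : ∀ v : Fin n → ℝ, v ≠ 0 → 0 < B v v := by
    intro v hv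
    have h1 : 0 ≤ ∑ t ∈ Finset.range N, (a t ⬝ᵥ v) * (a t ⬝ᵥ v) :=
      Finset.sum_nonneg fun t _ => mul_self_nonneg _
    have h2 : 0 < v ⬝ᵥ v := by
      rcases lt_or_eq_of_le (Finset.sum_nonneg fun i _ => mul_self_nonneg (v i)) with h | h
      · exact h
      · exact absurd (dotProduct_self_eq_zero.mp h.symm) hv
    have := mul_pos hω h2
    simp only [hB]
    linarith
  -- key expansion of L at a point plus a direction
  have Lexp : ∀ (x v : Fin n → ℝ),
      L (x + v) = L x + (1 / N) * ((b ⬝ᵥ v) - lam * B x v)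
        - (lam / (2 * N)) * B v v := by
    intro x v
    have hxv : x + v = (1 : ℝ) • x + (1 : ℝ) • v := by simp
    rw [hLQ, hLQ, hxv, Bexp, dotlin]
    ring
  -- the dot-product form of the gradient equation
  have graddot : ∀ (x v : Fin n → ℝ),
      (b - lam • (∑ t ∈ Finset.range N, (a t ⬝ᵥ x) • a t + ω • x)) ⬝ᵥ v
        = (b ⬝ᵥ v) - lam * B x v := by
    intro x v
    rw [sub_dotProduct, smul_dotProduct, add_dotProduct,
      sum_dot', smul_dotProduct]
    have : ∑ t ∈ Finset.range N, ((a t ⬝ᵥ x) • a t) ⬝ᵥ v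
        = ∑ t ∈ Finset.range N, (a t ⬝ᵥ x) * (a t ⬝ᵥ v) := by
      refine Finset.sum_congr rfl fun t _ => ?_
      rw [smul_dotProduct]; simp [smul_eq_mul]
    rw [this]
    simp [smul_eq_mul, hB]
  constructor
  · -- strict concavity
    refine ⟨convex_univ, ?_⟩
    intro x _ y _ hxy s t hs ht hst
    have hQdiff : B x x - 2 * B x y + B y y = B (x - y) (x - y) := by
      have hxy' : (1:ℝ) • x + (-1:ℝ) • y = x - y := by
        simp [sub_eq_add_neg]
      have h5 := Bexp x y 1 (-1)
      rw [hxy'] at h5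
      rw [h5]; ring
    have hpos : 0 < B (x - y) (x - y) :=
      Bpos _ (sub_ne_zero_of_ne hxy)
    have hcomb : s • x + t • y = s • x + t • y := rfl
    have hLc : L (s • x + t • y)
        = (1 / N) * (s * (b ⬝ᵥ x) + t * (b ⬝ᵥ y))
          - (lam / (2 * N)) * (s ^ 2 * B x x + 2 * s * t * B x y + t ^ 2 * B y y) := by
      rw [hLQ, Bexp, dotlin]
    have hLx := hLQ x
    have hLy := hLQ y
    have key : s • L x + t • L y < L (s • x + t • y) := by
      rw [hLc, hLx, hLy]
      have hstt : s + t = 1 := hst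
      have e1 : s • ((1 / ↑N) * (b ⬝ᵥ x) - lam / (2 * ↑N) * B x x)
          + t • ((1 / ↑N) * (b ⬝ᵥ y) - lam / (2 * ↑N) * B y y)
          = (1 / ↑N) * (s * (b ⬝ᵥ x) + t * (b ⬝ᵥ y))
            - (lam / (2 * ↑N)) * (s * B x x + t * B y y) := by
        simp [smul_eq_mul]; ring
      rw [e1]
      have e2 : (s * B x x + t * B y y)
          - (s ^ 2 * B x x + 2 * s * t * B x y + t ^ 2 * B y y)
          = s * t * (B x x - 2 * B x y + B y y) := by
        have hs' : t = 1 - s := by linarith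
        subst hs'; ring
      have hst' : 0 < s * t := mul_pos hs ht
      have hfac : 0 < (lam / (2 * N)) * (s * t * B (x - y) (x - y)) := by
        apply mul_pos (div_pos hlam (by linarith)) (mul_pos hst' hpos)
      rw [hQdiff] at e2
      have e3 : lam / (2 * ↑N) * (s * B x x + t * B y y)
          - lam / (2 * ↑N) * (s ^ 2 * B x x + 2 * s * t * B x y + t ^ 2 * B y y)
          = lam / (2 * ↑N) * (s * t * B (x - y) (x - y)) := by
        rw [← mul_sub, e2]
      linarith [hfac, e3]
    exact key
  · -- characterization of the maximizer
    intro h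
    set w : Fin n → ℝ :=
      b - lam • (∑ t ∈ Finset.range N, (a t ⬝ᵥ h) • a t + ω • h) with hw
    have heq : (lam • (∑ t ∈ Finset.range N, (((p0 ᵥ* T ^ (t + 1) - p0 ᵥ* T ^ t) ⬝ᵥ h) •
              (p0 ᵥ* T ^ (t + 1) - p0 ᵥ* T ^ t)) + ω • h) = p0 ᵥ* T ^ N - p0) ↔ w = 0 := by
      constructor
      · intro he
        rw [hw, sub_eq_zero]
        exact he.symm
      · intro he
        rw [hw, sub_eq_zero] at he
        exact he.symm
    rw [heq]
    constructor
    · -- strict max → stationarity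
      intro hmax
      by_contra hw0
      -- move uphill in direction w
      set s : ℝ := (w ⬝ᵥ w) / (lam * B w w) with hs
      have hww : 0 < w ⬝ᵥ w := by
        rcases lt_or_eq_of_le (Finset.sum_nonneg fun i _ => mul_self_nonneg (w i)) with h' | h'
        · exact h'
        · exact absurd (dotProduct_self_eq_zero.mp h'.symm) hw0
      have hBw : 0 < B w w := Bpos w hw0
      have hspos : 0 < s := div_pos hww (mul_pos hlam hBw)
      have hne : h + s • w ≠ h := by
        intro hcon
        have : s • w = 0 := by
          have := congrArg (fun z => z - h) hcon
          simpa [add_sub_cancel_left] using this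
        rcases smul_eq_zero.mp this with h' | h'
        · exact absurd h' (ne_of_gt hspos)
        · exact hw0 h'
      have hLv := Lexp h (s • w)
      have hdot : (b ⬝ᵥ (s • w)) - lam * B h (s • w) = s * (w ⬝ᵥ w) := by
        rw [← graddot, ← hw, dotProduct_smul]
        simp [smul_eq_mul, dotProduct_comm]
      have hBs : B (s • w) (s • w) = s ^ 2 * B w w := by
        have := Bexp w w s 0
        simpa using this
      rw [hdot, hBs] at hLv
      have hgain : 0 < (1 / (N:ℝ)) * (s * (w ⬝ᵥ w)) - (lam / (2 * N)) * (s ^ 2 * B w w) := by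
        have hsval : lam * B w w * s = w ⬝ᵥ w := by
          rw [hs]; field_simp
        have : (1 / (N:ℝ)) * (s * (w ⬝ᵥ w)) - (lam / (2 * N)) * (s ^ 2 * B w w)
            = (s / N) * ((w ⬝ᵥ w) - (lam * B w w * s) / 2) := by
          field_simp
        rw [this, hsval]
        have : (w ⬝ᵥ w) - (w ⬝ᵥ w) / 2 = (w ⬝ᵥ w) / 2 := by ring
        rw [this]
        exact mul_pos (div_pos hspos hNpos) (by linarith)
      have := hmax (h + s • w) hne
      linarith
    · -- stationarity → strict max
      intro hw0 g hg
      have hv : g - h ≠ 0 := sub_ne_zero_of_ne hg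
      have hLv := Lexp h (g - h)
      have hdot : (b ⬝ᵥ (g - h)) - lam * B h (g - h) = 0 := by
        rw [← graddot, ← hw, hw0]
        simp [dotProduct]
      rw [add_sub_cancel] at hLv
      rw [hLv, hdot]
      have : 0 < (lam / (2 * N)) * B (g - h) (g - h) :=
        mul_pos (div_pos hlam (by linarith)) (Bpos _ hv)
      linarith
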